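/- Let Y₀ be a skew Young diagram with N boxes and let T be an (m,n)-semistandard tableau of shape Y₀ with columns T₁, ..., T_N (from left). The column bumping procedure applied to T and a letter c ∈ B (inserting c into T₁, routing the bumped letter into T₂, etc., or appending at the bottom of a column when possible) terminates and produces an (m,n)-semistandard tableau T' whose shape is obtained from Y₀ by adding exactly one box at a co-corner of Y₀. -/

import Mathlib

/-- Row-semistandardness of a horizontal pair of letters (codes `0,…,m+n-1`,
barred = codes `< m`). -/
def rowSS (m x y : ℕ) : Prop := x ≤ y ∧ (x = y → x < m)

/-- Column-semistandardness of a vertical pair of letters. -/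
def colSS (m x y : ℕ) : Prop := x ≤ y ∧ (x = y → m ≤ x)

instance (m x y : ℕ) : Decidable (rowSS m x y) := by unfold rowSS; infer_instance
instance (m x y : ℕ) : Decidable (colSS m x y) := by unfold colSS; infer_instance
instance (m : ℕ) : DecidableRel (colSS m) := fun _ _ => inferInstance

/-- A skew tableau represented column-wise: the `j`-th entry `(o, l)` of the
list describes the `j`-th column, occupying rows `o, o+1, …, o+l.length-1`
with entries `l` (read from the top). -/
def colAt (cols : List (ℕ × List ℕ)) (j : ℕ) : ℕ × List ℕ := cols.getD j (0, [])

/-- `(m,n)`-semistandardness of a column-wise presented skew tableau: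
all columns are nonempty, column-semistandard, with entries in `B`; tops and
bottoms of consecutive columns weakly decrease from left to right (so the
shape is a skew Young diagram), and adjacent entries in the same row are
row-semistandard. -/
def IsSkewSSYT (m n : ℕ) (cols : List (ℕ × List ℕ)) : Prop :=
  (∀ c ∈ cols, c.2 ≠ []) ∧
  (∀ c ∈ cols, c.2.Chain' (colSS m)) ∧
  (∀ c ∈ cols, ∀ x ∈ c.2, x < m + n) ∧
  (∀ j, j + 1 < cols.length →
    (colAt cols (j+1)).1 ≤ (colAt cols j).1 ∧
    (colAt cols (j+1)).1 + (colAt cols (j+1)).2.length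
        ≤ (colAt cols j).1 + (colAt cols j).2.length ∧
    ∀ i, (colAt cols j).1 ≤ i →
      i < (colAt cols (j+1)).1 + (colAt cols (j+1)).2.length →
      rowSS m ((colAt cols j).2.getD (i - (colAt cols j).1) 0)
        ((colAt cols (j+1)).2.getD (i - (colAt cols (j+1)).1) 0))

/-- The set of boxes `(row, column)` of a column-wise presented tableau. -/
def cellsOf (cols : List (ℕ × List ℕ)) : Set (ℕ × ℕ) :=
  {q | q.2 < cols.length ∧ (colAt cols q.2).1 ≤ q.1 ∧
       q.1 < (colAt cols q.2).1 + (colAt cols q.2).2.length}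

/-- The column bumping procedure: insert the letter `b` into the first column;
if it can be appended at the bottom (keeping the column semistandard) the
procedure stops, otherwise `b` bumps out the entry at the smallest
row-semistandard position, and the bumped letter is inserted into the next
column; when all columns are exhausted a new one-box column is created. -/
def skewBump (m : ℕ) : ℕ → List (ℕ × List ℕ) → List (ℕ × List ℕ)
  | b, [] => [(0, [b])]
  | b, (o, l) :: rest =>
    if (l ++ [b]).IsChain (colSS m) then (o, l ++ [b]) :: rest
    else
      (o, l.set (l.findIdx fun a => decide (rowSS m b a)) b) ::
        skewBump m (l.getD (l.findIdx fun a => decide (rowSS m b a)) 0) rest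

lemma rowSS_iff {m x y : ℕ} : rowSS m x y ↔ (x < y ∨ (x = y ∧ x < m)) := by unfold rowSS; omega
lemma colSS_iff {m x y : ℕ} : colSS m x y ↔ (x < y ∨ (x = y ∧ m ≤ x)) := by unfold colSS; omega
instance (m : ℕ) : IsTrans ℕ (colSS m) where
  trans := by intro a b c; simp only [colSS_iff]; omega
lemma chain'_getD_lt {m : ℕ} {l : List ℕ} (h : l.IsChain (colSS m)) {i j : ℕ}
    (hij : i < j) (hj : j < l.length) : colSS m (l.getD i 0) (l.getD j 0) := by
  rw [List.getD_eq_getElem _ _ (hij.trans hj), List.getD_eq_getElem _ _ hj]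
  exact List.pairwise_iff_get.mp (List.isChain_iff_pairwise.mp h) ⟨i, hij.trans hj⟩ ⟨j, hj⟩ hij
lemma chain'_getD_le {m : ℕ} {l : List ℕ} (h : l.IsChain (colSS m)) {i j : ℕ}
    (hij : i ≤ j) (hj : j < l.length) : l.getD i 0 ≤ l.getD j 0 := by
  rcases eq_or_lt_of_le hij with rfl | hlt
  · exact le_refl _
  · exact (chain'_getD_lt h hlt hj).1

section bumpcol
variable {m b : ℕ} {l : List ℕ}

/-- last-element colSS fact from a chain on `l ++ [b]`. -/
lemma colSS_last_of_append (h : (l ++ [b]).IsChain (colSS m)) (hne : l ≠ []) :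
    colSS m (l.getD (l.length - 1) 0) b := by
  obtain ⟨-, -, h3⟩ := List.isChain_append.mp h
  have hlast : l.getLast? = some (l.getLast hne) := List.getLast?_eq_getLast hne
  have := h3 _ hlast b rfl
  rwa [List.getLast_eq_getElem, ← List.getD_eq_getElem l 0] at this

/-- if appending fails, `b` fits row-wise before the last entry -/
lemma rowSS_last_of_not_append (hl : l.IsChain (colSS m)) (hne : l ≠ [])
    (h : ¬ (l ++ [b]).IsChain (colSS m)) : rowSS m b (l.getD (l.length - 1) 0) := by
  have hlast : l.getLast? = some (l.getLast hne) := List.getLast?_eq_getLast hne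
  have : ¬ colSS m (l.getD (l.length - 1) 0) b := by
    intro hc
    apply h
    rw [List.isChain_append]
    refine ⟨hl, List.isChain_singleton b, ?_⟩
    intro x hx y hy
    rw [hlast, Option.mem_def, Option.some.injEq] at hx
    rw [List.head?_cons, Option.mem_def, Option.some.injEq] at hy
    subst hx; subst hy
    rwa [List.getLast_eq_getElem, ← List.getD_eq_getElem l 0]
  rw [colSS_iff] at this; rw [rowSS_iff]; omega

/-- in append case no entry admits rowSS with b -/
lemma no_rowSS_of_append (h : (l ++ [b]).IsChain (colSS m)) (hne : l ≠ [])
    {k : ℕ} (hk : k < l.length) (hr : rowSS m b (l.getD k 0)) : False := by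
  have hl : l.IsChain (colSS m) := (List.isChain_append.mp h).1
  have h1 := colSS_last_of_append h hne
  have h2 := chain'_getD_le hl (Nat.le_sub_one_of_lt hk) (by omega)
  rw [colSS_iff] at h1; rw [rowSS_iff] at hr; omega

lemma nu_lt_length (hl : l.IsChain (colSS m)) (hne : l ≠ [])
    (hna : ¬ (l ++ [b]).IsChain (colSS m)) :
    l.findIdx (fun a => decide (rowSS m b a)) < l.length := by
  apply List.findIdx_lt_length_of_exists
  have hlen : l.length - 1 < l.length := by
    cases l with
    | nil => exact absurd rfl hne
    | cons a t => simp
  refine ⟨l.getD (l.length - 1) 0, ?_, ?_⟩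
  · rw [List.getD_eq_getElem l 0 hlen]; exact List.getElem_mem _
  · simp only [decide_eq_true_eq]
    exact rowSS_last_of_not_append hl hne hna

lemma rowSS_nu (hl : l.IsChain (colSS m)) (hne : l ≠ [])
    (hna : ¬ (l ++ [b]).IsChain (colSS m)) :
    rowSS m b (l.getD (l.findIdx (fun a => decide (rowSS m b a))) 0) := by
  have h := nu_lt_length hl hne hna (b := b)
  rw [List.getD_eq_getElem _ _ h]
  simpa using List.findIdx_getElem (w := h)

lemma not_rowSS_of_lt_nu (hl : l.IsChain (colSS m)) (hne : l ≠ [])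
    (hna : ¬ (l ++ [b]).IsChain (colSS m))
    {k : ℕ} (hk : k < l.findIdx (fun a => decide (rowSS m b a))) :
    ¬ rowSS m b (l.getD k 0) := by
  have h' := nu_lt_length hl hne hna (b := b)
  rw [List.getD_eq_getElem _ _ (hk.trans h')]
  simpa using List.not_of_lt_findIdx hk

lemma getD_lt_nu (hl : l.IsChain (colSS m)) (hne : l ≠ [])
    (hna : ¬ (l ++ [b]).IsChain (colSS m))
    {k : ℕ} (hk : k < l.findIdx (fun a => decide (rowSS m b a))) :
    l.getD k 0 < l.getD (l.findIdx (fun a => decide (rowSS m b a))) 0 := by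
  have h1 := rowSS_nu hl hne hna
  have h2 := not_rowSS_of_lt_nu hl hne hna hk
  have h3 := chain'_getD_le hl hk.le (nu_lt_length hl hne hna)
  rcases eq_or_lt_of_le h3 with heq | hlt
  · exact absurd (heq ▸ h1) h2
  · exact hlt

lemma set_nu_chain (hl : l.IsChain (colSS m)) (hne : l ≠ [])
    (hna : ¬ (l ++ [b]).IsChain (colSS m)) :
    (l.set (l.findIdx (fun a => decide (rowSS m b a))) b).IsChain (colSS m) := by
  set ν := l.findIdx (fun a => decide (rowSS m b a)) with hν
  have hνl := nu_lt_length hl hne hna (b := b)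
  have hrow := rowSS_nu hl hne hna (b := b)
  rw [← hν] at hrow
  rw [List.isChain_iff_getElem]
  intro i hi
  simp only [List.length_set] at hi
  show colSS m ((l.set ν b).get ⟨i, by simp; omega⟩) ((l.set ν b).get ⟨i+1, by simp; omega⟩)
  have hi1 : i + 1 < l.length := by omega
  have geq : ∀ (k) (hk : k < l.length), (l.set ν b).get ⟨k, by simpa using hk⟩
      = if k = ν then b else l.getD k 0 := by
    intro k hk
    rcases eq_or_ne k ν with rfl | hne'
    · simp [List.getElem_set_self, List.get_eq_getElem]
    · simp only [List.get_eq_getElem, List.getElem_set_ne (Ne.symm hne'), if_neg hne']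
      rw [List.getD_eq_getElem _ _ hk]
  rw [geq i (by omega), geq (i+1) hi1]
  rcases eq_or_ne i ν with hb0 | hne1
  · rw [if_pos hb0, if_neg (by omega)]
    -- colSS b l_{ν+1}
    have hch : colSS m (l.getD ν 0) (l.getD (i+1) 0) :=
      hb0 ▸ chain'_getD_lt hl (Nat.lt_succ_self i) hi1
    rw [colSS_iff] at hch ⊢; rw [rowSS_iff] at hrow; omega
  · rw [if_neg hne1]
    rcases eq_or_ne (i+1) ν with hb1 | hne2
    · rw [if_pos hb1]
      -- colSS l_{ν-1} b
      have hnr := not_rowSS_of_lt_nu hl hne hna (k := i) (by omega)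
      rw [rowSS_iff] at hnr; rw [colSS_iff]; omega
    · rw [if_neg hne2]
      exact chain'_getD_lt hl (Nat.lt_succ_self i) hi1

end bumpcol

lemma colAt_cons_succ (c : ℕ × List ℕ) (cs : List (ℕ × List ℕ)) (j : ℕ) :
    colAt (c :: cs) (j+1) = colAt cs j := rfl

lemma colAt_cons_zero (c : ℕ × List ℕ) (cs : List (ℕ × List ℕ)) :
    colAt (c :: cs) 0 = c := rfl

lemma colAt_nil (j : ℕ) : colAt [] j = (0, []) := by cases j <;> rfl

lemma mem_cellsOf {cs : List (ℕ × List ℕ)} {q : ℕ × ℕ} :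
    q ∈ cellsOf cs ↔ (q.2 < cs.length ∧ (colAt cs q.2).1 ≤ q.1 ∧
      q.1 < (colAt cs q.2).1 + (colAt cs q.2).2.length) := Iff.rfl

lemma mem_cellsOf_cons_zero {c : ℕ × List ℕ} {cs : List (ℕ × List ℕ)} {i : ℕ} :
    (i, 0) ∈ cellsOf (c :: cs) ↔ (c.1 ≤ i ∧ i < c.1 + c.2.length) := by
  rw [mem_cellsOf]; simp [colAt_cons_zero]

lemma mem_cellsOf_cons_succ {c : ℕ × List ℕ} {cs : List (ℕ × List ℕ)} {i j : ℕ} :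
    (i, j+1) ∈ cellsOf (c :: cs) ↔ (i, j) ∈ cellsOf cs := by
  rw [mem_cellsOf, mem_cellsOf, colAt_cons_succ]
  simp [Nat.succ_lt_succ_iff]

/-- building an `IsSkewSSYT` list by cons -/
lemma isSkew_cons {m n : ℕ} {c : ℕ × List ℕ} {cs : List (ℕ × List ℕ)}
    (h1 : c.2 ≠ []) (h2 : c.2.Chain' (colSS m)) (h3 : ∀ x ∈ c.2, x < m + n)
    (ht : IsSkewSSYT m n cs)
    (hj : cs.length ≠ 0 →
      (colAt cs 0).1 ≤ c.1 ∧
      (colAt cs 0).1 + (colAt cs 0).2.length ≤ c.1 + c.2.length ∧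
      ∀ i, c.1 ≤ i → i < (colAt cs 0).1 + (colAt cs 0).2.length →
        rowSS m (c.2.getD (i - c.1) 0) ((colAt cs 0).2.getD (i - (colAt cs 0).1) 0)) :
    IsSkewSSYT m n (c :: cs) := by
  obtain ⟨t1, t2, t3, t4⟩ := ht
  refine ⟨?_, ?_, ?_, ?_⟩
  · intro d hd; rcases List.mem_cons.mp hd with rfl | hd'; exact h1; exact t1 d hd'
  · intro d hd; rcases List.mem_cons.mp hd with rfl | hd'; exact h2; exact t2 d hd'
  · intro d hd; rcases List.mem_cons.mp hd with rfl | hd'; exact h3; exact t3 d hd' 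
  · intro j hjlen
    cases j with
    | zero =>
      rw [colAt_cons_succ, colAt_cons_zero]
      exact hj (by simp at hjlen; omega)
    | succ j' =>
      rw [colAt_cons_succ, colAt_cons_succ]
      exact t4 j' (by simpa using hjlen)

lemma isSkew_tail {m n : ℕ} {c : ℕ × List ℕ} {cs : List (ℕ × List ℕ)}
    (h : IsSkewSSYT m n (c :: cs)) : IsSkewSSYT m n cs := by
  obtain ⟨t1, t2, t3, t4⟩ := h
  refine ⟨fun d hd => t1 d (by simp [hd]), fun d hd => t2 d (by simp [hd]),
    fun d hd => t3 d (by simp [hd]), fun j hj => ?_⟩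
  have := t4 (j+1) (by simpa using hj)
  rwa [colAt_cons_succ, colAt_cons_succ] at this


lemma getD_set_ne0 {l : List ℕ} {ν k b : ℕ} (h : k ≠ ν) :
    (l.set ν b).getD k 0 = l.getD k 0 := by
  rcases lt_or_ge k l.length with hk | hk
  · rw [List.getD_eq_getElem _ _ (by simpa using hk), List.getD_eq_getElem _ _ hk]
    exact List.getElem_set_ne (Ne.symm h) _
  · rw [List.getD_eq_default _ _ (by simpa using hk), List.getD_eq_default _ _ hk]

lemma getD_set_self0 {l : List ℕ} {ν b : ℕ} (h : ν < l.length) :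
    (l.set ν b).getD ν 0 = b := by
  rw [List.getD_eq_getElem _ _ (by simpa using h)]
  exact List.getElem_set_self _

lemma skewBump_main (m n : ℕ) (cols : List (ℕ × List ℕ)) (b : ℕ)
    (hT : IsSkewSSYT m n cols) (hb : b < m + n) :
    IsSkewSSYT m n (skewBump m b cols) ∧
    (∃ q : ℕ × ℕ, q ∉ cellsOf cols ∧ cellsOf (skewBump m b cols) = insert q (cellsOf cols)) ∧
    ∃ r : ℕ,
      (colAt (skewBump m b cols) 0).1 = (colAt cols 0).1 ∧
      (colAt cols 0).1 ≤ r ∧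
      r ≤ (colAt cols 0).1 + (colAt cols 0).2.length ∧
      ((colAt (skewBump m b cols) 0).1 + (colAt (skewBump m b cols) 0).2.length
          = (colAt cols 0).1 + (colAt cols 0).2.length ∨
        (colAt (skewBump m b cols) 0).1 + (colAt (skewBump m b cols) 0).2.length = r + 1) ∧
      (colAt cols 0).1 + (colAt cols 0).2.length
        ≤ (colAt (skewBump m b cols) 0).1 + (colAt (skewBump m b cols) 0).2.length ∧
      r < (colAt (skewBump m b cols) 0).1 + (colAt (skewBump m b cols) 0).2.length ∧
      (∀ i, (colAt cols 0).1 ≤ i → i ≠ r →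
        (colAt (skewBump m b cols) 0).2.getD (i - (colAt (skewBump m b cols) 0).1) 0
          = (colAt cols 0).2.getD (i - (colAt cols 0).1) 0) ∧
      (colAt (skewBump m b cols) 0).2.getD (r - (colAt (skewBump m b cols) 0).1) 0 = b ∧
      (∀ i, (colAt cols 0).1 ≤ i → i < (colAt cols 0).1 + (colAt cols 0).2.length →
        rowSS m b ((colAt cols 0).2.getD (i - (colAt cols 0).1) 0) → r ≤ i) := by
  induction cols generalizing b with
  | nil =>
    rw [skewBump]
    refine ⟨⟨?_, ?_, ?_, ?_⟩, ⟨(0,0), ?_, ?_⟩, 0, ?_, ?_, ?_, ?_, ?_, ?_, ?_, ?_, ?_⟩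
    · rintro c hc; rw [List.mem_singleton] at hc; subst hc; simp
    · rintro c hc; rw [List.mem_singleton] at hc; subst hc; exact List.isChain_singleton b
    · rintro c hc x hx; rw [List.mem_singleton] at hc; subst hc
      rw [List.mem_singleton] at hx; omega
    · intro j hj; simp at hj
    · intro hmem; rw [mem_cellsOf] at hmem; simp at hmem
    · ext ⟨i, j⟩
      rcases j with _ | j
      · rw [Set.mem_insert_iff, mem_cellsOf_cons_zero, mem_cellsOf]
        simp only [and_true, true_and, Prod.mk.injEq, List.length_singleton, List.length_nil,
          colAt_nil]
        omega
      · rw [Set.mem_insert_iff, mem_cellsOf_cons_succ, mem_cellsOf, mem_cellsOf]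
        simp [Prod.ext_iff, colAt_nil]
    · rfl
    · exact le_refl 0
    · simp [colAt_nil]
    · simp [colAt_nil, colAt_cons_zero]
    · simp [colAt_nil, colAt_cons_zero]
    · simp [colAt_nil, colAt_cons_zero]
    · intro i _ hi
      simp only [colAt_cons_zero, colAt_nil, Nat.sub_zero]
      rw [List.getD_eq_default _ _ (by simp; omega), List.getD_eq_default _ _ (by simp)]
    · simp [colAt_cons_zero]
    · intro i _ hi; simp [colAt_nil] at hi
  | cons hd rest IH =>
    obtain ⟨o, l⟩ := hd
    have hlne : l ≠ [] := hT.1 (o,l) (List.mem_cons_self)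
    have hl : l.Chain' (colSS m) := hT.2.1 (o,l) (List.mem_cons_self)
    have hlb : ∀ x ∈ l, x < m + n := hT.2.2.1 (o,l) (List.mem_cons_self)
    have hlpos : 0 < l.length := List.length_pos_iff.mpr hlne
    have htail : IsSkewSSYT m n rest := isSkew_tail hT
    -- junction facts between (o,l) and rest (when rest ≠ [])
    have hj0 : rest ≠ [] →
        (colAt rest 0).1 ≤ o ∧
        (colAt rest 0).1 + (colAt rest 0).2.length ≤ o + l.length ∧
        (∀ i, o ≤ i → i < (colAt rest 0).1 + (colAt rest 0).2.length →
          rowSS m (l.getD (i - o) 0) ((colAt rest 0).2.getD (i - (colAt rest 0).1) 0)) := by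
      intro hne
      have h := hT.2.2.2 0 (by simp [List.length_pos_iff.mpr hne])
      rw [colAt_cons_succ, colAt_cons_zero] at h
      exact h
    have hbotnil : rest = [] → (colAt rest 0).1 + (colAt rest 0).2.length = 0 := by
      rintro rfl; simp [colAt_nil]
    by_cases hap : (l ++ [b]).IsChain (colSS m)
    · -- append case
      rw [skewBump, if_pos hap]
      refine ⟨?_, ⟨(o + l.length, 0), ?_, ?_⟩, o + l.length,
          ?_, ?_, ?_, ?_, ?_, ?_, ?_, ?_, ?_⟩
      · refine isSkew_cons (by simp) hap ?_ htail ?_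
        · intro x hx
          rcases List.mem_append.mp hx with hx | hx
          · exact hlb x hx
          · simp at hx; omega
        · intro hlen
          have hne : rest ≠ [] := by intro h; rw [h] at hlen; simp at hlen
          obtain ⟨j1, j2, j3⟩ := hj0 hne
          simp only [List.length_append, List.length_singleton]
          refine ⟨j1, by omega, ?_⟩
          intro i hi1 hi2
          rw [List.getD_append _ _ _ _ (by omega)]
          exact j3 i hi1 hi2
      · rw [mem_cellsOf_cons_zero]; dsimp only; omega
      · ext ⟨i, j⟩
        rcases j with _ | j
        · rw [Set.mem_insert_iff, mem_cellsOf_cons_zero, mem_cellsOf_cons_zero]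
          simp only [and_true, true_and, Prod.mk.injEq, List.length_append,
            List.length_singleton]
          omega
        · rw [Set.mem_insert_iff, mem_cellsOf_cons_succ, mem_cellsOf_cons_succ]
          simp [Prod.mk.injEq]
      · rfl
      · simp only [colAt_cons_zero]; omega
      · simp only [colAt_cons_zero]; omega
      · simp only [colAt_cons_zero, List.length_append,
          List.length_singleton]
        omega
      · simp only [colAt_cons_zero, List.length_append,
          List.length_singleton]
        omega
      · simp only [colAt_cons_zero, List.length_append,
          List.length_singleton]
        omega
      · intro i hi1 hi2
        simp only [colAt_cons_zero] at hi1 hi2 ⊢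
        rcases lt_or_ge (i - o) l.length with hk | hk
        · rw [List.getD_append _ _ _ _ hk]
        · have h1 : (l ++ [b]).length ≤ i - o := by
            simp only [List.length_append, List.length_singleton]; omega
          rw [List.getD_eq_default _ _ h1, List.getD_eq_default _ _ hk]
      · simp only [colAt_cons_zero, Nat.add_sub_cancel_left]
        rw [List.getD_append_right _ _ _ _ (le_refl _)]
        simp
      · intro i hi1 hi2 hr
        simp only [colAt_cons_zero] at hi1 hi2 hr
        exact absurd hr (fun hr => no_rowSS_of_append hap hlne (k := i - o) (by omega) hr)
    · -- bump case
      rw [skewBump, if_neg hap]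
      set ν := l.findIdx (fun a => decide (rowSS m b a)) with hνdef
      set b' := l.getD ν 0 with hb'def
      have hν : ν < l.length := nu_lt_length hl hlne hap
      have hrow : rowSS m b b' := rowSS_nu hl hlne hap
      have hb'lt : b' < m + n := by
        apply hlb
        rw [hb'def, List.getD_eq_getElem _ _ hν]
        exact List.getElem_mem _
      have hCstrict : ∀ k, k < ν → l.getD k 0 < b' := fun k hk => getD_lt_nu hl hlne hap hk
      have hCnot : ∀ k, k < ν → ¬ rowSS m b (l.getD k 0) := fun k hk =>
        not_rowSS_of_lt_nu hl hlne hap hk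
      obtain ⟨ih1, ⟨q', hq'mem, hq'eq⟩, r', f1, f2, f3, f4a, f4b, f4c, f5, f6, f7⟩ :=
        IH b' htail hb'lt
      set S' := skewBump m b' rest with hS'def
      set l' := l.set ν b with hl'def
      have hl'len : l'.length = l.length := List.length_set
      have hl'chain : l'.Chain' (colSS m) := set_nu_chain hl hlne hap
      have hl'nu : l'.getD ν 0 = b := getD_set_self0 hν
      have hl'set : ∀ k, k ≠ ν → l'.getD k 0 = l.getD k 0 := fun k hk => getD_set_ne0 hk
      have hl'mem : ∀ x ∈ l', x < m + n := by
        intro x hx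
        rcases List.mem_or_eq_of_mem_set hx with hx | rfl
        · exact hlb x hx
        · exact hb
      have hS'ne : S'.length ≠ 0 := by
        rw [hS'def]
        rcases rest with _ | ⟨⟨oc, lc⟩, t⟩
        · rw [skewBump]; simp
        · rw [skewBump]; split <;> simp
      clear_value S' l' b' ν
      clear hS'def hl'def hap
      -- the key inequality  r' ≤ o + ν
      have hr'le : r' ≤ o + ν := by
        rcases le_or_gt ((colAt rest 0).1 + (colAt rest 0).2.length) (o + ν) with hc1 | hc1
        · omega
        · have hne : rest ≠ [] := by
            intro h; rw [hbotnil h] at hc1; omega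
          obtain ⟨j1, j2, j3⟩ := hj0 hne
          have hx := j3 (o + ν) (by omega) hc1
          rw [Nat.add_sub_cancel_left, ← hb'def] at hx
          exact f7 (o + ν) (by omega) hc1 hx
      have hl'at : ∀ i, o ≤ i → i ≠ o + ν → l'.getD (i - o) 0 = l.getD (i - o) 0 := by
        intro i hi hne
        exact hl'set _ (by omega)
      refine ⟨?_, ⟨(q'.1, q'.2 + 1), ?_, ?_⟩, o + ν, ?_, ?_, ?_, ?_, ?_, ?_, ?_, ?_, ?_⟩
      · refine isSkew_cons ?_ hl'chain hl'mem ih1 ?_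
        · dsimp only
          intro hh; rw [hh] at hl'len; simp at hl'len; omega
        · intro _
          dsimp only
          have htop : (colAt S' 0).1 ≤ o := by
            rw [f1]
            rcases eq_or_ne rest [] with rfl | hne
            · rw [colAt_nil]; exact Nat.zero_le o
            · exact (hj0 hne).1
          have hbotr : (colAt rest 0).1 + (colAt rest 0).2.length ≤ o + l.length := by
            rcases eq_or_ne rest [] with rfl | hne
            · rw [hbotnil rfl]; omega
            · exact (hj0 hne).2.1
          refine ⟨htop, by omega, ?_⟩
          intro i hi1 hi2
          rcases eq_or_ne i r' with rfl | hir'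
          · rw [f6]
            rcases eq_or_ne i (o + ν) with heq | hne2
            · rw [heq, Nat.add_sub_cancel_left, hl'nu]
              exact hrow
            · have hlt : i - o < ν := by omega
              have h5 := hCstrict (i - o) hlt
              rw [hl'at i hi1 hne2, rowSS_iff]
              omega
          · have hibot : i < (colAt rest 0).1 + (colAt rest 0).2.length := by omega
            have hne : rest ≠ [] := by
              intro h; rw [hbotnil h] at hibot; omega
            obtain ⟨j1, j2, j3⟩ := hj0 hne
            have hold := j3 i hi1 hibot
            rw [f5 i (by omega) hir']
            rcases eq_or_ne i (o + ν) with heq | hne2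
            · rw [heq, Nat.add_sub_cancel_left, hl'nu]
              rw [heq, Nat.add_sub_cancel_left] at hold
              rw [rowSS_iff] at hold hrow ⊢
              omega
            · rw [hl'at i hi1 hne2]
              exact hold
      · intro hmem
        obtain ⟨R, J⟩ := q'
        rw [mem_cellsOf_cons_succ] at hmem
        exact hq'mem hmem
      · obtain ⟨R, J⟩ := q'
        ext ⟨i, j⟩
        rcases j with _ | j
        · rw [Set.mem_insert_iff, mem_cellsOf_cons_zero, mem_cellsOf_cons_zero]
          simp only [and_true, true_and, Prod.mk.injEq, hl'len]
          omega
        · rw [Set.mem_insert_iff, mem_cellsOf_cons_succ, mem_cellsOf_cons_succ, hq'eq,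
            Set.mem_insert_iff]
          simp [Prod.mk.injEq]
      · rfl
      · simp only [colAt_cons_zero]; omega
      · simp only [colAt_cons_zero]; omega
      · left; simp only [colAt_cons_zero, hl'len]
      · simp only [colAt_cons_zero, hl'len]; omega
      · simp only [colAt_cons_zero, hl'len]; omega
      · intro i hi1 hi2
        simp only [colAt_cons_zero] at hi1 hi2 ⊢
        exact hl'at i hi1 hi2
      · simp only [colAt_cons_zero, Nat.add_sub_cancel_left]
        exact hl'nu
      · intro i hi1 hi2 hr
        simp only [colAt_cons_zero] at hi1 hi2 hr
        by_contra hcon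
        exact hCnot (i - o) (by omega) hr


lemma colAt_anti (f : ℕ × List ℕ → ℕ) (S : List (ℕ × List ℕ))
    (h : ∀ j, j + 1 < S.length → f (colAt S (j+1)) ≤ f (colAt S j)) :
    ∀ i j, i ≤ j → j < S.length → f (colAt S j) ≤ f (colAt S i) := by
  intro i j hij hj
  induction j with
  | zero =>
    have : i = 0 := by omega
    subst this; exact le_refl _
  | succ j ih =>
    rcases eq_or_lt_of_le hij with rfl | hlt
    · exact le_refl _
    · exact le_trans (h j hj) (ih (by omega) (by omega))

lemma sorted_map_colAt (f : ℕ × List ℕ → ℕ) (S : List (ℕ × List ℕ))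
    (h : ∀ j, j + 1 < S.length → f (colAt S (j+1)) ≤ f (colAt S j)) :
    (S.map f).Pairwise (· ≥ ·) := by
  rw [List.pairwise_iff_getElem]
  intro i j hi hj hij
  rw [List.length_map] at hi hj
  rw [List.getElem_map, List.getElem_map, ge_iff_le,
    ← List.getD_eq_getElem S (0, []) hi, ← List.getD_eq_getElem S (0, []) hj]
  exact colAt_anti f S h i j (by omega) hj

lemma exists_outer_inner (S : List (ℕ × List ℕ))
    (h : ∀ j, j + 1 < S.length →
      (colAt S (j+1)).1 ≤ (colAt S j).1 ∧
      (colAt S (j+1)).1 + (colAt S (j+1)).2.length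
        ≤ (colAt S j).1 + (colAt S j).2.length) :
    ∃ outer inner : YoungDiagram, inner.cells ⊆ outer.cells ∧
      cellsOf S = (↑outer.cells : Set (ℕ × ℕ)) \ ↑inner.cells := by
  have colAt_get : ∀ (j : ℕ) (hj : j < S.length), colAt S j = S[j] := fun j hj =>
    List.getD_eq_getElem S (0, []) hj
  have hsb : (S.map (fun c => c.1 + c.2.length)).Pairwise (· ≥ ·) :=
    sorted_map_colAt _ S (fun j hj => (h j hj).2)
  have hst : (S.map (fun c => c.1)).Pairwise (· ≥ ·) :=
    sorted_map_colAt _ S (fun j hj => (h j hj).1)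
  refine ⟨(YoungDiagram.ofRowLens _ (List.sortedGE_iff_pairwise.mpr hsb)).transpose, (YoungDiagram.ofRowLens _ (List.sortedGE_iff_pairwise.mpr hst)).transpose,
    ?_, ?_⟩
  · intro p hp
    rw [YoungDiagram.mem_cells, YoungDiagram.mem_transpose, YoungDiagram.mem_ofRowLens] at hp ⊢
    obtain ⟨h1, h2⟩ := hp
    rw [List.length_map] at h1
    rw [List.getElem_map] at h2
    refine ⟨by rwa [List.length_map], ?_⟩
    rw [List.getElem_map]
    simp only [Prod.fst_swap, Prod.snd_swap] at h2 ⊢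
    omega
  · ext p
    rw [Set.mem_diff, Finset.mem_coe, Finset.mem_coe, YoungDiagram.mem_cells,
      YoungDiagram.mem_cells, YoungDiagram.mem_transpose, YoungDiagram.mem_transpose,
      YoungDiagram.mem_ofRowLens, YoungDiagram.mem_ofRowLens, mem_cellsOf]
    simp only [Prod.fst_swap, Prod.snd_swap, List.length_map]
    constructor
    · rintro ⟨h1, h2, h3⟩
      refine ⟨⟨h1, ?_⟩, ?_⟩
      · rw [List.getElem_map, ← colAt_get _ h1]; omega
      · rintro ⟨h4, h5⟩
        rw [List.getElem_map, ← colAt_get _ h1] at h5; omega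
    · rintro ⟨⟨h1, h2⟩, h3⟩
      rw [List.getElem_map, ← colAt_get _ h1] at h2
      refine ⟨h1, ?_, by omega⟩
      by_contra hcon
      exact h3 ⟨h1, by rw [List.getElem_map, ← colAt_get _ h1]; omega⟩

/-- Theorem (column bumping): for an `(m,n)`-semistandard skew tableau `T` of
shape `Y₀` and a letter `c ∈ B`, the bumping procedure terminates and yields
an `(m,n)`-semistandard tableau whose shape is obtained from `Y₀` by adding
exactly one box, at a co-corner of `Y₀` (i.e. the enlarged shape is again a
skew Young diagram `outer \ inner`). -/
theorem skewBump_spec (m n : ℕ) (cols : List (ℕ × List ℕ)) (c : ℕ)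
    (hT : IsSkewSSYT m n cols) (hc : c < m + n) :
    IsSkewSSYT m n (skewBump m c cols) ∧
    ∃ q : ℕ × ℕ, q ∉ cellsOf cols ∧
      cellsOf (skewBump m c cols) = insert q (cellsOf cols) ∧
      ∃ outer inner : YoungDiagram, inner.cells ⊆ outer.cells ∧
        insert q (cellsOf cols) = (↑outer.cells : Set (ℕ × ℕ)) \ ↑inner.cells := by
  obtain ⟨h1, ⟨q, hq1, hq2⟩, -⟩ := skewBump_main m n cols c hT hc
  obtain ⟨outer, inner, hsub, heq⟩ := exists_outer_inner (skewBump m c cols)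
    (fun j hj => ⟨(h1.2.2.2 j hj).1, (h1.2.2.2 j hj).2.1⟩)
  exact ⟨h1, q, hq1, hq2, outer, inner, hsub, by rw [← hq2]; exact heq⟩
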